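/- The Cartan–Serre map CS : C(□^n) → C(Δ^n) is a map of counital coalgebras: (CS ⊗ CS) ∘ Δ_□ = Δ_AW ∘ CS and ε_Δ ∘ CS = ε_□, where Δ_□ is the Serre diagonal and Δ_AW the Alexander–Whitney coproduct. -/

import Mathlib

/-- The three cells of the interval: `[0]`, `[0,1]` (written `mid`), and `[1]`. -/
inductive CubeF : Type
  | zero : CubeF
  | mid : CubeF
  | one : CubeF
  deriving DecidableEq

namespace CartanSerre

/-- Basis elements of the cubical chain complex `C(□^n)`: tensors `x_1 ⊗ ⋯ ⊗ x_n`. -/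
abbrev CubeB (n : ℕ) := Fin n → CubeF
/-- The cubical chain complex `C(□^n)` (as the free ℤ-module on its basis). -/
abbrev CubeChain (n : ℕ) := CubeB n →₀ ℤ
/-- `C(□^n) ⊗ C(□^n)`, modeled as the free ℤ-module on pairs of basis elements. -/
abbrev CubeChain2 (n : ℕ) := (CubeB n × CubeB n) →₀ ℤ
/-- Basis elements of `C(Δ^n)`: strictly increasing tuples `[v_0, …, v_m]` with
`v_i ∈ {0,…,n}`, i.e. nonempty finite subsets of `Fin (n+1)` (`∅` is not used). -/
abbrev SimpB (n : ℕ) := Finset (Fin (n + 1))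
/-- The normalized simplicial chain complex `C(Δ^n)`. -/
abbrev SimpChain (n : ℕ) := SimpB n →₀ ℤ
/-- `C(Δ^n) ⊗ C(Δ^n)`. -/
abbrev SimpChain2 (n : ℕ) := (SimpB n × SimpB n) →₀ ℤ

/-- Degree of a cubical basis element: the number of factors equal to `[0,1]`. -/
def cubeDeg {n : ℕ} (x : CubeB n) : ℕ :=
  (Finset.univ.filter fun i => x i = CubeF.mid).card

/-- Degree of a simplicial basis element `[v_0, …, v_m]`, namely `m`. -/
def simpDeg {n : ℕ} (s : SimpB n) : ℕ := s.card - 1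

/-- The cubical boundary on a basis element. -/
noncomputable def cubeBdFun (n : ℕ) (x : CubeB n) : CubeChain n :=
  ∑ i ∈ Finset.univ.filter (fun i => x i = CubeF.mid),
    ((-1 : ℤ) ^ (Finset.univ.filter fun j => j < i ∧ x j = CubeF.mid).card) •
      (Finsupp.single (Function.update x i CubeF.one) 1 -
        Finsupp.single (Function.update x i CubeF.zero) 1)

/-- The cubical boundary `∂ : C(□^n) → C(□^n)`. -/
noncomputable def cubeBd (n : ℕ) : CubeChain n →ₗ[ℤ] CubeChain n :=
  Finsupp.lift (CubeChain n) ℤ (CubeB n) (cubeBdFun n)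

/-- The (normalized) simplicial boundary on a basis element. -/
noncomputable def simpBdFun (n : ℕ) (s : SimpB n) : SimpChain n :=
  if 2 ≤ s.card then
    ∑ v ∈ s, ((-1 : ℤ) ^ (s.filter fun w => w < v).card) • Finsupp.single (s.erase v) 1
  else 0

/-- The simplicial boundary `∂ : C(Δ^n) → C(Δ^n)`. -/
noncomputable def simpBd (n : ℕ) : SimpChain n →ₗ[ℤ] SimpChain n :=
  Finsupp.lift (SimpChain n) ℤ (SimpB n) (simpBdFun n)

/-- `p(x) - 1` (0-indexed): the first position of a factor `[0]`, or `n` if there is none. -/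
def pIdx {n : ℕ} (x : CubeB n) : Fin (n + 1) :=
  ⟨(List.ofFn x).findIdx (fun c => decide (c = CubeF.zero)), by
    have h : (List.ofFn x).findIdx (fun c => decide (c = CubeF.zero)) ≤ (List.ofFn x).length :=
      List.findIdx_le_length
    simp only [List.length_ofFn] at h
    omega⟩

/-- The vertex set `[q_1 - 1, …, q_m - 1, p(x) - 1]` of the image of `x` under `CS`. -/
def csSet {n : ℕ} (x : CubeB n) : SimpB n :=
  insert (pIdx x) ((Finset.univ.filter fun i => x i = CubeF.mid).image Fin.castSucc)

/-- The Cartan–Serre map `CS` on a cubical basis element. -/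
noncomputable def csFun (n : ℕ) (x : CubeB n) : SimpChain n :=
  if ∃ i j : Fin n, i < j ∧ x i = CubeF.zero ∧ x j = CubeF.mid then 0
  else Finsupp.single (csSet x) 1

/-- The Cartan–Serre chain map `CS : C(□^n) → C(Δ^n)`. -/
noncomputable def csL (n : ℕ) : CubeChain n →ₗ[ℤ] SimpChain n :=
  Finsupp.lift (SimpChain n) ℤ (CubeB n) (csFun n)

/-- The cubical counit `ε_□ : C(□^n) → ℤ`. -/
noncomputable def cubeEps (n : ℕ) : CubeChain n →ₗ[ℤ] ℤ :=
  Finsupp.lift ℤ ℤ (CubeB n) (fun x => if cubeDeg x = 0 then (1 : ℤ) else 0)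

/-- The simplicial counit `ε_Δ : C(Δ^n) → ℤ`. -/
noncomputable def simpEps (n : ℕ) : SimpChain n →ₗ[ℤ] ℤ :=
  Finsupp.lift ℤ ℤ (SimpB n) (fun s => if s.card = 1 then (1 : ℤ) else 0)

/-- Tensor product of two elements of free modules, in the product-basis model. -/
noncomputable def tensorF {α β : Type*} (a : α →₀ ℤ) (b : β →₀ ℤ) : (α × β) →₀ ℤ :=
  a.sum fun i r => b.sum fun j s => Finsupp.single (i, j) (r * s)

/-- Left factor of the Serre diagonal summand indexed by `S`:
factors in `S` contribute `[0,1]`, the other `[0,1]`-factors contribute `[0]`. -/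
def serreL {n : ℕ} (x : CubeB n) (S : Finset (Fin n)) : CubeB n := fun i =>
  if x i = CubeF.mid then (if i ∈ S then CubeF.mid else CubeF.zero) else x i

/-- Right factor of the Serre diagonal summand indexed by `S`. -/
def serreR {n : ℕ} (x : CubeB n) (S : Finset (Fin n)) : CubeB n := fun i =>
  if x i = CubeF.mid then (if i ∈ S then CubeF.one else CubeF.mid) else x i

/-- Koszul sign exponent of the Serre diagonal summand indexed by `S`. -/
def serreSign {n : ℕ} (x : CubeB n) (S : Finset (Fin n)) : ℕ :=
  ((Finset.univ : Finset (Fin n × Fin n)).filter fun p =>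
    p.1 < p.2 ∧ x p.1 = CubeF.mid ∧ p.1 ∉ S ∧ p.2 ∈ S).card

/-- The Serre diagonal `Δ_□` on a basis element: the tensor product (with Koszul
signs) of `Δ[0] = [0]⊗[0]`, `Δ[1] = [1]⊗[1]`, `Δ[0,1] = [0]⊗[0,1] + [0,1]⊗[1]`. -/
noncomputable def serreDiagFun (n : ℕ) (x : CubeB n) : CubeChain2 n :=
  ∑ S ∈ (Finset.univ.filter fun i => x i = CubeF.mid).powerset,
    ((-1 : ℤ) ^ serreSign x S) • Finsupp.single (serreL x S, serreR x S) 1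

/-- The Serre diagonal `Δ_□ : C(□^n) → C(□^n) ⊗ C(□^n)`. -/
noncomputable def serreDiag (n : ℕ) : CubeChain n →ₗ[ℤ] CubeChain2 n :=
  Finsupp.lift (CubeChain2 n) ℤ (CubeB n) (serreDiagFun n)

/-- The Alexander–Whitney coproduct on a basis element:
`Δ_AW [v_0,…,v_m] = Σ_i [v_0,…,v_i] ⊗ [v_i,…,v_m]`. -/
noncomputable def awFun (n : ℕ) (s : SimpB n) : SimpChain2 n :=
  ∑ v ∈ s, Finsupp.single (s.filter fun w => w ≤ v, s.filter fun w => v ≤ w) 1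

/-- The Alexander–Whitney coproduct `Δ_AW : C(Δ^n) → C(Δ^n) ⊗ C(Δ^n)`. -/
noncomputable def awDiag (n : ℕ) : SimpChain n →ₗ[ℤ] SimpChain2 n :=
  Finsupp.lift (SimpChain2 n) ℤ (SimpB n) (awFun n)

/-- `CS ⊗ CS : C(□^n) ⊗ C(□^n) → C(Δ^n) ⊗ C(Δ^n)` (no Koszul signs: `CS` has degree 0). -/
noncomputable def cs2L (n : ℕ) : CubeChain2 n →ₗ[ℤ] SimpChain2 n :=
  Finsupp.lift (SimpChain2 n) ℤ (CubeB n × CubeB n)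
    (fun p => tensorF (csFun n p.1) (csFun n p.2))

/-- The join on single cube factors: `[0] ∗ [1] = [0,1]`, `[1] ∗ [0] = -[0,1]`,
all other joins of basis elements vanish (the outcome factor being `[0,1]`). -/
def joinF : CubeF → CubeF → ℤ
  | CubeF.zero, CubeF.one => 1
  | CubeF.one, CubeF.zero => -1
  | _, _ => 0

/-- The cubical join `∗` on basis elements. -/
noncomputable def cubeJoinFun (n : ℕ) (x y : CubeB n) : CubeChain n :=
  ((-1 : ℤ) ^ cubeDeg x) •
    ∑ l : Fin n,
      ((if (∀ j, j < l → y j ≠ CubeF.mid) ∧ (∀ j, l < j → x j ≠ CubeF.mid) then (1 : ℤ) else 0) *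
          joinF (x l) (y l)) •
        Finsupp.single (fun j => if j < l then x j else if j = l then CubeF.mid else y j) 1

/-- The cubical join, extended bilinearly to chains. -/
noncomputable def cubeJoinC (n : ℕ) (a b : CubeChain n) : CubeChain n :=
  a.sum fun x r => b.sum fun y s => (r * s) • cubeJoinFun n x y

/-- The simplicial join `∗` on basis elements: `0` if the vertex sets meet, and
otherwise `(-1)^{p + |σ|}` times the union, `|σ|` counting the inversions. -/
noncomputable def simpJoinFun (n : ℕ) (s t : SimpB n) : SimpChain n :=
  if s ∩ t = ∅ ∧ s.Nonempty ∧ t.Nonempty then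
    ((-1 : ℤ) ^ ((s.card - 1) + ((s ×ˢ t).filter fun p => p.2 < p.1).card)) •
      Finsupp.single (s ∪ t) 1
  else 0

/-- The simplicial join, extended bilinearly to chains. -/
noncomputable def simpJoinC (n : ℕ) (a b : SimpChain n) : SimpChain n :=
  a.sum fun s r => b.sum fun t u => (r * u) • simpJoinFun n s t

/-- The linear order `[0] < [0,1] < [1]` on interval cells, via `0 < 1 < 2`. -/
def cellVal : CubeF → ℕ
  | CubeF.zero => 0
  | CubeF.mid => 1
  | CubeF.one => 2

/-- The componentwise partial order on cubical basis elements,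
with `[0] < [0,1] < [1]` on each factor. -/
def cubeLe {n : ℕ} (x y : CubeB n) : Prop := ∀ i, cellVal (x i) ≤ cellVal (y i)

/-- Left-parenthesized iterated join of a nonempty list (the base case `[]` is junk). -/
noncomputable def foldJoin {C : Type*} (join : C → C → C) (z : C) : List C → C
  | [] => z
  | a :: l => l.foldl join a

/-- Left-parenthesized iterated cubical join `∗^{k}` of `k+1` basis elements. -/
noncomputable def iterCubeJoin (n k : ℕ) (f : Fin (k + 1) → CubeB n) : CubeChain n :=
  foldJoin (cubeJoinC n) 0 (List.ofFn fun i : Fin (k + 1) => (Finsupp.single (f i) 1 : CubeChain n))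

/-- Left-parenthesized iterated simplicial join `∗^{k}` of `k+1` chains. -/
noncomputable def iterSimpJoin (n k : ℕ) (g : Fin (k + 1) → SimpChain n) : SimpChain n :=
  foldJoin (simpJoinC n) 0 (List.ofFn g)

/-- The iterated Serre diagonal `Δ_□^k` on a basis element, with `k+1` output factors
(iterated on the last factor; this is unambiguous by coassociativity, and no Koszul
signs appear since `Δ_□` has degree `0`). -/
noncomputable def serreIterFun (n : ℕ) : (k : ℕ) → CubeB n → ((Fin (k + 1) → CubeB n) →₀ ℤ)
  | 0, x => Finsupp.single (fun _ => x) 1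
  | k + 1, x =>
    (serreIterFun n k x).sum fun f c =>
      (serreDiagFun n (f (Fin.last k))).sum fun p d =>
        Finsupp.single
          (fun i : Fin (k + 2) =>
            if h : (i : ℕ) < k then f ⟨(i : ℕ), by omega⟩
            else if (i : ℕ) = k then p.1 else p.2) (c * d)

/-- The iterated Serre diagonal `Δ_□^k : C(□^n) → C(□^n)^{⊗(k+1)}`. -/
noncomputable def serreIter (n k : ℕ) : CubeChain n →ₗ[ℤ] ((Fin (k + 1) → CubeB n) →₀ ℤ) :=
  Finsupp.lift _ ℤ (CubeB n) (serreIterFun n k)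

/-- The iterated Alexander–Whitney coproduct `Δ_AW^k` on a basis element. -/
noncomputable def awIterFun (n : ℕ) : (k : ℕ) → SimpB n → ((Fin (k + 1) → SimpB n) →₀ ℤ)
  | 0, s => Finsupp.single (fun _ => s) 1
  | k + 1, s =>
    (awIterFun n k s).sum fun f c =>
      (awFun n (f (Fin.last k))).sum fun p d =>
        Finsupp.single
          (fun i : Fin (k + 2) =>
            if h : (i : ℕ) < k then f ⟨(i : ℕ), by omega⟩
            else if (i : ℕ) = k then p.1 else p.2) (c * d)

/-- The iterated Alexander–Whitney coproduct `Δ_AW^k : C(Δ^n) → C(Δ^n)^{⊗(k+1)}`. -/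
noncomputable def awIter (n k : ℕ) : SimpChain n →ₗ[ℤ] ((Fin (k + 1) → SimpB n) →₀ ℤ) :=
  Finsupp.lift _ ℤ (SimpB n) (awIterFun n k)

/-- The action of a permutation `τ` on a `k`-fold tensor of basis elements,
with the Koszul sign determined by the degrees of the factors it transposes. -/
noncomputable def koszulPermFun {α : Type*} (deg : α → ℕ) {k : ℕ} (τ : Equiv.Perm (Fin k))
    (f : Fin k → α) : (Fin k → α) →₀ ℤ :=
  ((-1 : ℤ) ^ ∑ p ∈ (Finset.univ : Finset (Fin k × Fin k)).filter
      (fun p => p.1 < p.2 ∧ τ p.2 < τ p.1), deg (f (τ p.1)) * deg (f (τ p.2))) •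
    Finsupp.single (fun i => f (τ i)) 1

/-- The action of a permutation on `k`-fold tensors, with Koszul signs. -/
noncomputable def koszulPerm {α : Type*} (deg : α → ℕ) {k : ℕ} (τ : Equiv.Perm (Fin k)) :
    ((Fin k → α) →₀ ℤ) →ₗ[ℤ] ((Fin k → α) →₀ ℤ) :=
  Finsupp.lift _ ℤ (Fin k → α) (koszulPermFun deg τ)

/-- Tensor product of an `r`-tuple of elements of a free module, product-basis model. -/
noncomputable def tensorPi {r : ℕ} {α : Type*} [DecidableEq α] (c : Fin r → (α →₀ ℤ)) :
    (Fin r → α) →₀ ℤ :=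
  ∑ g ∈ Fintype.piFinset (fun i => (c i).support), Finsupp.single g (∏ i, (c i) (g i))

/-- `CS^{⊗ r} : C(□^n)^{⊗ r} → C(Δ^n)^{⊗ r}` (no Koszul signs: `CS` has degree 0). -/
noncomputable def csTensor (n r : ℕ) : ((Fin r → CubeB n) →₀ ℤ) →ₗ[ℤ] ((Fin r → SimpB n) →₀ ℤ) :=
  Finsupp.lift _ ℤ (Fin r → CubeB n) (fun f => tensorPi fun i => csFun n (f i))

/-- The index in `Fin (k_1 + ⋯ + k_r)` of the `j`-th tensor factor of the `i`-th block. -/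
def blockIdx {r : ℕ} (K : Fin r → ℕ) {m : ℕ} (hm : m + 1 = ∑ i, K i) (i : Fin r)
    (j : Fin (K i)) : Fin (m + 1) :=
  ⟨(∑ j' ∈ Finset.univ.filter (fun j' => j' < i), K j') + (j : ℕ), by
    have h2 : (j : ℕ) < K i := j.isLt
    have h3 : K i + ∑ j' ∈ Finset.univ.filter (fun j' => j' < i), K j' ≤ ∑ i', K i' := by
      rw [← Finset.sum_insert (a := i) (s := Finset.univ.filter (fun j' => j' < i)) (by simp)]
      exact Finset.sum_le_sum_of_subset (Finset.subset_univ _)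
    omega⟩

/-- A `(k_1, …, k_r)`-shuffle: a permutation increasing on each block. -/
def IsShuffle {r : ℕ} (K : Fin r → ℕ) {m : ℕ} (hm : m + 1 = ∑ i, K i)
    (σ : Equiv.Perm (Fin (m + 1))) : Prop :=
  ∀ (i : Fin r) (j j' : Fin (K i)), j < j' → σ (blockIdx K hm i j) < σ (blockIdx K hm i j')

/-- Total degree of the `i`-th block of a `k`-fold cubical tensor. -/
def cubeBlockDeg {n r : ℕ} (K : Fin r → ℕ) {m : ℕ} (hm : m + 1 = ∑ i, K i)
    (f : Fin (m + 1) → CubeB n) (i : Fin r) : ℕ :=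
  ∑ j : Fin (K i), cubeDeg (f (blockIdx K hm i j))

/-- Total degree of the `i`-th block of a `k`-fold simplicial tensor. -/
def simpBlockDeg {n r : ℕ} (K : Fin r → ℕ) {m : ℕ} (hm : m + 1 = ∑ i, K i)
    (f : Fin (m + 1) → SimpB n) (i : Fin r) : ℕ :=
  ∑ j : Fin (K i), simpDeg (f (blockIdx K hm i j))

/-- `∗^{k_1 - 1} ⊗ ⋯ ⊗ ∗^{k_r - 1}` on a cubical `k`-fold tensor basis element, with
the Koszul sign for applying the degree-`(k_i - 1)` maps across the earlier blocks. -/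
noncomputable def cubeBlockJoinFun (n r : ℕ) (K : Fin r → ℕ) {m : ℕ} (hm : m + 1 = ∑ i, K i)
    (f : Fin (m + 1) → CubeB n) : (Fin r → CubeB n) →₀ ℤ :=
  ((-1 : ℤ) ^ ∑ p ∈ (Finset.univ : Finset (Fin r × Fin r)).filter (fun p => p.1 < p.2),
      (K p.2 - 1) * cubeBlockDeg K hm f p.1) •
    tensorPi (fun i : Fin r =>
      foldJoin (cubeJoinC n) 0
        (List.ofFn fun j : Fin (K i) => (Finsupp.single (f (blockIdx K hm i j)) 1 : CubeChain n)))

/-- `∗^{k_1 - 1} ⊗ ⋯ ⊗ ∗^{k_r - 1} : C(□^n)^{⊗ k} → C(□^n)^{⊗ r}`. -/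
noncomputable def cubeBlockJoin (n r : ℕ) (K : Fin r → ℕ) {m : ℕ} (hm : m + 1 = ∑ i, K i) :
    ((Fin (m + 1) → CubeB n) →₀ ℤ) →ₗ[ℤ] ((Fin r → CubeB n) →₀ ℤ) :=
  Finsupp.lift _ ℤ (Fin (m + 1) → CubeB n) (cubeBlockJoinFun n r K hm)

/-- `∗^{k_1 - 1} ⊗ ⋯ ⊗ ∗^{k_r - 1}` on a simplicial `k`-fold tensor basis element. -/
noncomputable def simpBlockJoinFun (n r : ℕ) (K : Fin r → ℕ) {m : ℕ} (hm : m + 1 = ∑ i, K i)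
    (f : Fin (m + 1) → SimpB n) : (Fin r → SimpB n) →₀ ℤ :=
  ((-1 : ℤ) ^ ∑ p ∈ (Finset.univ : Finset (Fin r × Fin r)).filter (fun p => p.1 < p.2),
      (K p.2 - 1) * simpBlockDeg K hm f p.1) •
    tensorPi (fun i : Fin r =>
      foldJoin (simpJoinC n) 0
        (List.ofFn fun j : Fin (K i) => (Finsupp.single (f (blockIdx K hm i j)) 1 : SimpChain n)))

/-- `∗^{k_1 - 1} ⊗ ⋯ ⊗ ∗^{k_r - 1} : C(Δ^n)^{⊗ k} → C(Δ^n)^{⊗ r}`. -/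
noncomputable def simpBlockJoin (n r : ℕ) (K : Fin r → ℕ) {m : ℕ} (hm : m + 1 = ∑ i, K i) :
    ((Fin (m + 1) → SimpB n) →₀ ℤ) →ₗ[ℤ] ((Fin r → SimpB n) →₀ ℤ) :=
  Finsupp.lift _ ℤ (Fin (m + 1) → SimpB n) (simpBlockJoinFun n r K hm)

/-- A chain is homogeneous of degree `m` if its support is contained in degree-`m` basis elements. -/
def cubeHomog (n m : ℕ) (c : CubeChain n) : Prop := ∀ x ∈ c.support, cubeDeg x = m

/-- A simplicial chain is homogeneous of degree `m` if every basis element in its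
support is a strictly increasing tuple `[v_0, …, v_m]`, i.e. has `m+1` vertices. -/
def simpHomog (n m : ℕ) (c : SimpChain n) : Prop := ∀ s ∈ c.support, s.card = m + 1

end CartanSerre

namespace CartanSerre

variable {n : ℕ}

/-- The vanishing condition for `csFun`. -/
def Bad (x : CubeB n) : Prop :=
  ∃ i j : Fin n, i < j ∧ x i = CubeF.zero ∧ x j = CubeF.mid

/-- The set of `mid` positions. -/
def Mset (x : CubeB n) : Finset (Fin n) := Finset.univ.filter fun i => x i = CubeF.mid

/-- The initial segment of `Mset x` below `v`. -/
def Sv (x : CubeB n) (v : Fin (n + 1)) : Finset (Fin n) :=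
  (Mset x).filter fun i => (i : ℕ) < (v : ℕ)

lemma liftZ_single {α β : Type*} (f : α → (β →₀ ℤ)) (a : α) (c : ℤ) :
    Finsupp.lift (β →₀ ℤ) ℤ α f (Finsupp.single a c) = c • f a := by
  rw [Finsupp.lift_apply, Finsupp.sum_single_index]
  exact zero_smul ℤ (f a)

lemma liftZ_single' {α : Type*} (f : α → ℤ) (a : α) (c : ℤ) :
    Finsupp.lift ℤ ℤ α f (Finsupp.single a c) = c * f a := by
  rw [Finsupp.lift_apply, Finsupp.sum_single_index]
  · rw [smul_eq_mul]
  · exact zero_smul ℤ (f a)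

lemma tensorF_single_single {α β : Type*} (a : α) (b : β) (c d : ℤ) :
    tensorF (Finsupp.single a c) (Finsupp.single b d) = Finsupp.single (a, b) (c * d) := by
  rw [tensorF, Finsupp.sum_single_index (by simp), Finsupp.sum_single_index (by simp)]

lemma tensorF_zero_left {α β : Type*} (b : β →₀ ℤ) :
    tensorF (0 : α →₀ ℤ) b = 0 := by
  simp [tensorF]

lemma tensorF_zero_right {α β : Type*} (a : α →₀ ℤ) :
    tensorF a (0 : β →₀ ℤ) = 0 := by
  simp [tensorF]

lemma csFun_of_bad (x : CubeB n) (hx : Bad x) : csFun n x = 0 := by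
  rw [csFun]; exact if_pos hx

lemma csFun_of_not_bad (x : CubeB n) (hx : ¬ Bad x) :
    csFun n x = Finsupp.single (csSet x) 1 := by
  rw [csFun]; exact if_neg hx

lemma pIdx_spec1 (x : CubeB n) (i : Fin n) (h : (i : ℕ) < (pIdx x : ℕ)) : x i ≠ CubeF.zero := by
  have h' : (i : ℕ) < (List.ofFn x).findIdx (fun c => decide (c = CubeF.zero)) := h
  have := List.not_of_lt_findIdx h'
  simpa [List.getElem_ofFn] using this

lemma pIdx_spec2 (x : CubeB n) (i : Fin n) (h : (i : ℕ) = (pIdx x : ℕ)) : x i = CubeF.zero := by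
  have hv : (pIdx x : ℕ) = (List.ofFn x).findIdx (fun c => decide (c = CubeF.zero)) := rfl
  have hl : (List.ofFn x).findIdx (fun c => decide (c = CubeF.zero)) < (List.ofFn x).length := by
    simp only [List.length_ofFn]; have := i.isLt; omega
  have := List.findIdx_getElem (w := hl)
  simp only [List.getElem_ofFn] at this
  have h2 : x ⟨(pIdx x : ℕ), by have := i.isLt; omega⟩ = CubeF.zero := of_decide_eq_true this
  convert h2 using 2
  exact Fin.ext h

lemma pIdx_unique (x : CubeB n) (k : Fin (n + 1))
    (h1 : ∀ i : Fin n, (i : ℕ) < (k : ℕ) → x i ≠ CubeF.zero)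
    (h2 : ∀ i : Fin n, (i : ℕ) = (k : ℕ) → x i = CubeF.zero) : pIdx x = k := by
  rcases lt_trichotomy ((pIdx x : ℕ)) (k : ℕ) with h | h | h
  · exfalso
    have hlt : (pIdx x : ℕ) < n := by have := k.isLt; omega
    exact h1 ⟨_, hlt⟩ h (pIdx_spec2 x ⟨_, hlt⟩ rfl)
  · exact Fin.ext h
  · exfalso
    have hlt : (k : ℕ) < n := by have := (pIdx x).isLt; omega
    exact pIdx_spec1 x ⟨_, hlt⟩ h (h2 ⟨_, hlt⟩ rfl)

lemma mid_lt_pIdx {x : CubeB n} (hx : ¬ Bad x) {i : Fin n} (hi : x i = CubeF.mid) :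
    (i : ℕ) < (pIdx x : ℕ) := by
  by_contra h
  push_neg at h
  have hlt : (pIdx x : ℕ) < n := lt_of_le_of_lt h i.isLt
  have hz : x ⟨(pIdx x : ℕ), hlt⟩ = CubeF.zero := pIdx_spec2 x _ rfl
  rcases eq_or_lt_of_le h with h' | h'
  · rw [show i = (⟨(pIdx x : ℕ), hlt⟩ : Fin n) from Fin.ext h'.symm, hz] at hi
    exact CubeF.noConfusion hi
  · exact hx ⟨⟨(pIdx x : ℕ), hlt⟩, i, h', hz, hi⟩

lemma mem_csSet_iff {x : CubeB n} {w : Fin (n + 1)} :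
    w ∈ csSet x ↔ w = pIdx x ∨ ∃ i : Fin n, x i = CubeF.mid ∧ Fin.castSucc i = w := by
  simp [csSet]

lemma pIdx_mem_csSet (x : CubeB n) : pIdx x ∈ csSet x := by
  rw [mem_csSet_iff]; left; rfl

lemma mem_csSet_le_pIdx {x : CubeB n} (hx : ¬ Bad x) {w : Fin (n + 1)} (hw : w ∈ csSet x) :
    (w : ℕ) ≤ (pIdx x : ℕ) := by
  rcases mem_csSet_iff.mp hw with h | ⟨i, hi, hiw⟩
  · rw [h]
  · rw [← hiw]
    exact le_of_lt (mid_lt_pIdx hx hi)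

lemma pIdx_not_mem_image (x : CubeB n) :
    pIdx x ∉ (Mset x).image Fin.castSucc := by
  intro h
  rcases Finset.mem_image.mp h with ⟨i, hi, hiw⟩
  have hmid : x i = CubeF.mid := (Finset.mem_filter.mp hi).2
  have : (i : ℕ) = (pIdx x : ℕ) := by rw [← hiw]; rfl
  rw [pIdx_spec2 x i this] at hmid
  exact CubeF.noConfusion hmid

lemma card_csSet (x : CubeB n) : (csSet x).card = cubeDeg x + 1 := by
  have : (csSet x) = insert (pIdx x) ((Mset x).image Fin.castSucc) := rfl
  rw [this, Finset.card_insert_of_notMem (pIdx_not_mem_image x),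
    Finset.card_image_of_injective _ (Fin.castSucc_injective n)]
  rfl

lemma serreL_eq_mid {x : CubeB n} {S : Finset (Fin n)} (hS : S ⊆ Mset x) {i : Fin n} :
    serreL x S i = CubeF.mid ↔ i ∈ S := by
  rw [serreL]
  by_cases hm : x i = CubeF.mid
  · rw [if_pos hm]
    by_cases hi : i ∈ S <;> simp [hi]
  · rw [if_neg hm]
    constructor
    · intro h; exact absurd h hm
    · intro h; exact absurd ((Finset.mem_filter.mp (hS h)).2) hm

lemma serreL_eq_zero {x : CubeB n} {S : Finset (Fin n)} {i : Fin n} :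
    serreL x S i = CubeF.zero ↔ (x i = CubeF.zero ∨ (x i = CubeF.mid ∧ i ∉ S)) := by
  rw [serreL]
  by_cases hm : x i = CubeF.mid
  · rw [if_pos hm]
    by_cases hi : i ∈ S <;> simp [hi, hm]
  · rw [if_neg hm]; simp [hm]

lemma serreR_eq_mid {x : CubeB n} {S : Finset (Fin n)} {i : Fin n} :
    serreR x S i = CubeF.mid ↔ (x i = CubeF.mid ∧ i ∉ S) := by
  rw [serreR]
  by_cases hm : x i = CubeF.mid
  · rw [if_pos hm]
    by_cases hi : i ∈ S <;> simp [hi, hm]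
  · rw [if_neg hm]; simp [hm]

lemma serreR_eq_zero {x : CubeB n} {S : Finset (Fin n)} {i : Fin n} :
    serreR x S i = CubeF.zero ↔ x i = CubeF.zero := by
  rw [serreR]
  by_cases hm : x i = CubeF.mid
  · rw [if_pos hm]
    by_cases hi : i ∈ S <;> simp [hi, hm]
  · rw [if_neg hm]

lemma Mset_serreL {x : CubeB n} {S : Finset (Fin n)} (hS : S ⊆ Mset x) :
    Mset (serreL x S) = S := by
  ext i
  simp only [Mset, Finset.mem_filter, Finset.mem_univ, true_and]
  exact serreL_eq_mid hS

lemma Mset_serreR (x : CubeB n) (S : Finset (Fin n)) :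
    Mset (serreR x S) = Mset x \ S := by
  ext i
  simp only [Mset, Finset.mem_filter, Finset.mem_univ, true_and, Finset.mem_sdiff]
  exact serreR_eq_mid

lemma pIdx_serreR (x : CubeB n) (S : Finset (Fin n)) : pIdx (serreR x S) = pIdx x := by
  apply pIdx_unique
  · intro i h hz
    exact pIdx_spec1 x i h (serreR_eq_zero.mp hz)
  · intro i h
    exact serreR_eq_zero.mpr (pIdx_spec2 x i h)

lemma not_bad_serreR {x : CubeB n} (hx : ¬ Bad x) (S : Finset (Fin n)) :
    ¬ Bad (serreR x S) := by
  rintro ⟨i, j, hij, hi, hj⟩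
  exact hx ⟨i, j, hij, serreR_eq_zero.mp hi, (serreR_eq_mid.mp hj).1⟩

lemma Sv_subset (x : CubeB n) (v : Fin (n + 1)) : Sv x v ⊆ Mset x :=
  Finset.filter_subset _ _

lemma mem_Sv {x : CubeB n} {v : Fin (n + 1)} {i : Fin n} :
    i ∈ Sv x v ↔ x i = CubeF.mid ∧ (i : ℕ) < (v : ℕ) := by
  simp [Sv, Mset]

lemma not_bad_serreL_Sv {x : CubeB n} (hx : ¬ Bad x) {v : Fin (n + 1)} (hv : v ∈ csSet x) :
    ¬ Bad (serreL x (Sv x v)) := by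
  rintro ⟨i, j, hij, hi, hj⟩
  have hjS := (serreL_eq_mid (Sv_subset x v)).mp hj
  rw [mem_Sv] at hjS
  rcases serreL_eq_zero.mp hi with h0 | ⟨hm, hnS⟩
  · exact hx ⟨i, j, hij, h0, hjS.1⟩
  · have h1 : ¬ ((i : ℕ) < (v : ℕ)) := fun h => hnS (mem_Sv.mpr ⟨hm, h⟩)
    have h2 : (i : ℕ) < (j : ℕ) := hij
    omega

lemma pIdx_serreL_Sv {x : CubeB n} (hx : ¬ Bad x) {v : Fin (n + 1)} (hv : v ∈ csSet x) :
    pIdx (serreL x (Sv x v)) = v := by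
  apply pIdx_unique
  · intro i hiv hz
    rcases serreL_eq_zero.mp hz with h0 | ⟨hm, hnS⟩
    · exact pIdx_spec1 x i (lt_of_lt_of_le hiv (mem_csSet_le_pIdx hx hv)) h0
    · exact hnS (mem_Sv.mpr ⟨hm, hiv⟩)
  · intro i hiv
    apply serreL_eq_zero.mpr
    rcases mem_csSet_iff.mp hv with h | ⟨i₀, hi₀, he⟩
    · left
      exact pIdx_spec2 x i (by rw [hiv, h])
    · right
      have hii₀ : i = i₀ := by
        apply Fin.ext
        have : ((Fin.castSucc i₀ : Fin (n + 1)) : ℕ) = (i₀ : ℕ) := rfl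
        rw [← this, he, ← hiv]
      refine ⟨by rw [hii₀]; exact hi₀, ?_⟩
      rw [mem_Sv]
      rintro ⟨-, hlt⟩
      omega

lemma csSet_insert (y : CubeB n) :
    csSet y = insert (pIdx y) ((Mset y).image Fin.castSucc) := rfl

lemma csSet_serreL_Sv {x : CubeB n} (hx : ¬ Bad x) {v : Fin (n + 1)} (hv : v ∈ csSet x) :
    csSet (serreL x (Sv x v)) = (csSet x).filter (fun w => w ≤ v) := by
  rw [csSet_insert, pIdx_serreL_Sv hx hv, Mset_serreL (Sv_subset x v)]
  ext w
  simp only [Finset.mem_insert, Finset.mem_image, Finset.mem_filter]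
  constructor
  · rintro (rfl | ⟨i, hiS, rfl⟩)
    · exact ⟨hv, le_refl _⟩
    · rw [mem_Sv] at hiS
      exact ⟨mem_csSet_iff.mpr (Or.inr ⟨i, hiS.1, rfl⟩), Fin.le_def.mpr (le_of_lt hiS.2)⟩
  · rintro ⟨hw, hwv⟩
    by_cases hwe : w = v
    · exact Or.inl hwe
    · right
      have hwlt : (w : ℕ) < (v : ℕ) :=
        lt_of_le_of_ne (Fin.le_def.mp hwv) (fun h => hwe (Fin.ext h))
      rcases mem_csSet_iff.mp hw with h | ⟨i, hi, he⟩
      · exfalso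
        have h1 := mem_csSet_le_pIdx hx hv
        have h2 : (w : ℕ) = (pIdx x : ℕ) := by rw [h]
        omega
      · refine ⟨i, mem_Sv.mpr ⟨hi, ?_⟩, he⟩
        have : ((Fin.castSucc i : Fin (n + 1)) : ℕ) = (i : ℕ) := rfl
        rw [← this, he]
        exact hwlt

lemma csSet_serreR_Sv {x : CubeB n} (hx : ¬ Bad x) {v : Fin (n + 1)} (hv : v ∈ csSet x) :
    csSet (serreR x (Sv x v)) = (csSet x).filter (fun w => v ≤ w) := by
  rw [csSet_insert, pIdx_serreR, Mset_serreR]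
  ext w
  simp only [Finset.mem_insert, Finset.mem_image, Finset.mem_filter, Finset.mem_sdiff]
  constructor
  · rintro (rfl | ⟨i, ⟨hiM, hiS⟩, rfl⟩)
    · exact ⟨pIdx_mem_csSet x, Fin.le_def.mpr (mem_csSet_le_pIdx hx hv)⟩
    · have hxi : x i = CubeF.mid := (Finset.mem_filter.mp hiM).2
      refine ⟨mem_csSet_iff.mpr (Or.inr ⟨i, hxi, rfl⟩), ?_⟩
      rw [Fin.le_def]
      have : ¬ ((i : ℕ) < (v : ℕ)) := fun h => hiS (mem_Sv.mpr ⟨hxi, h⟩)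
      have h2 : ((Fin.castSucc i : Fin (n + 1)) : ℕ) = (i : ℕ) := rfl
      omega
  · rintro ⟨hw, hvw⟩
    rcases mem_csSet_iff.mp hw with h | ⟨i, hi, he⟩
    · exact Or.inl h
    · right
      refine ⟨i, ⟨Finset.mem_filter.mpr ⟨Finset.mem_univ i, hi⟩, ?_⟩, he⟩
      rw [mem_Sv]
      rintro ⟨-, hlt⟩
      have h1 := Fin.le_def.mp hvw
      have h2 : ((Fin.castSucc i : Fin (n + 1)) : ℕ) = (i : ℕ) := rfl
      rw [← he] at h1
      omega

lemma serreSign_Sv (x : CubeB n) (v : Fin (n + 1)) : serreSign x (Sv x v) = 0 := by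
  rw [serreSign, Finset.card_eq_zero, Finset.filter_eq_empty_iff]
  rintro p -
  rintro ⟨h12, hm, hnS, hS⟩
  have h2 := (mem_Sv.mp hS).2
  have h3 : ¬ ((p.1 : ℕ) < (v : ℕ)) := fun h => hnS (mem_Sv.mpr ⟨hm, h⟩)
  have h4 : (p.1 : ℕ) < (p.2 : ℕ) := h12
  omega

lemma exists_Sv {x : CubeB n} (hx : ¬ Bad x) {S : Finset (Fin n)} (hS : S ⊆ Mset x)
    (hdc : ¬ ∃ i j : Fin n, x i = CubeF.mid ∧ i ∉ S ∧ j ∈ S ∧ i < j) :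
    ∃ v ∈ csSet x, S = Sv x v := by
  push_neg at hdc
  by_cases hM : S = Mset x
  · refine ⟨pIdx x, pIdx_mem_csSet x, ?_⟩
    subst hM
    ext i
    rw [mem_Sv]
    simp only [Mset, Finset.mem_filter, Finset.mem_univ, true_and]
    exact ⟨fun h => ⟨h, mid_lt_pIdx hx h⟩, fun h => h.1⟩
  · have hne : (Mset x \ S).Nonempty := by
      rw [Finset.sdiff_nonempty]
      intro hsub
      exact hM (Finset.Subset.antisymm hS hsub)
    set i₀ := (Mset x \ S).min' hne with hi₀
    have hi₀mem := (Mset x \ S).min'_mem hne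
    have hi₀M : x i₀ = CubeF.mid := (Finset.mem_filter.mp (Finset.mem_sdiff.mp hi₀mem).1).2
    have hi₀S : i₀ ∉ S := (Finset.mem_sdiff.mp hi₀mem).2
    refine ⟨Fin.castSucc i₀, mem_csSet_iff.mpr (Or.inr ⟨i₀, hi₀M, rfl⟩), ?_⟩
    ext i
    rw [mem_Sv]
    have hcs : ((Fin.castSucc i₀ : Fin (n + 1)) : ℕ) = (i₀ : ℕ) := rfl
    constructor
    · intro hiS
      have hxi : x i = CubeF.mid := (Finset.mem_filter.mp (hS hiS)).2
      refine ⟨hxi, ?_⟩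
      rw [hcs]
      rcases lt_trichotomy (i : ℕ) (i₀ : ℕ) with h | h | h
      · exact h
      · exact absurd hiS (by rw [show i = i₀ from Fin.ext h]; exact hi₀S)
      · exact absurd h (by have h5 := hdc i₀ i hi₀M hi₀S hiS; rw [Fin.le_def] at h5; omega)
    · rintro ⟨hxi, hlt⟩
      rw [hcs] at hlt
      by_contra hiS
      have hmem : i ∈ Mset x \ S :=
        Finset.mem_sdiff.mpr ⟨Finset.mem_filter.mpr ⟨Finset.mem_univ i, hxi⟩, hiS⟩
      have := Finset.min'_le _ i hmem
      rw [← hi₀, Fin.le_def] at this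
      omega

lemma Sv_ne_of_lt {x : CubeB n} (hx : ¬ Bad x) {v w : Fin (n + 1)} (hv : v ∈ csSet x)
    (hw : w ∈ csSet x) (hvw : (v : ℕ) < (w : ℕ)) : Sv x v ≠ Sv x w := by
  rcases mem_csSet_iff.mp hv with h | ⟨i, hi, he⟩
  · exfalso
    have h1 := mem_csSet_le_pIdx hx hw
    have h2 : (v : ℕ) = (pIdx x : ℕ) := by rw [h]
    omega
  · intro heq
    have hcs : ((Fin.castSucc i : Fin (n + 1)) : ℕ) = (i : ℕ) := rfl
    have hiv : i ∉ Sv x v := by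
      rw [mem_Sv]
      rintro ⟨-, hlt⟩
      rw [← he, hcs] at hlt
      omega
    have hiw : i ∈ Sv x w := mem_Sv.mpr ⟨hi, by rw [← hcs, he]; exact hvw⟩
    rw [heq] at hiv
    exact hiv hiw

lemma Sv_injOn {x : CubeB n} (hx : ¬ Bad x) :
    ∀ v ∈ csSet x, ∀ w ∈ csSet x, Sv x v = Sv x w → v = w := by
  intro v hv w hw heq
  rcases lt_trichotomy (v : ℕ) (w : ℕ) with h | h | h
  · exact absurd heq (Sv_ne_of_lt hx hv hw h)
  · exact Fin.ext h
  · exact absurd heq.symm (Sv_ne_of_lt hx hw hv h)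

lemma cs2_serre_term_bad {x : CubeB n} (hx : Bad x) (S : Finset (Fin n)) :
    tensorF (csFun n (serreL x S)) (csFun n (serreR x S)) = 0 := by
  obtain ⟨i, j, hij, hi, hj⟩ := hx
  by_cases hjS : j ∈ S
  · have hbad : Bad (serreL x S) := by
      refine ⟨i, j, hij, serreL_eq_zero.mpr (Or.inl hi), ?_⟩
      show (if x j = CubeF.mid then (if j ∈ S then CubeF.mid else CubeF.zero) else x j) = CubeF.mid
      rw [if_pos hj, if_pos hjS]
    rw [csFun_of_bad _ hbad, tensorF_zero_left]
  · have hbad : Bad (serreR x S) :=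
      ⟨i, j, hij, serreR_eq_zero.mpr hi, serreR_eq_mid.mpr ⟨hj, hjS⟩⟩
    rw [csFun_of_bad _ hbad, tensorF_zero_right]

lemma cs2_serre_bad (x : CubeB n) (hx : Bad x) : cs2L n (serreDiagFun n x) = 0 := by
  rw [serreDiagFun, map_sum]
  apply Finset.sum_eq_zero
  intro S _
  rw [map_smul, cs2L, liftZ_single, one_smul, cs2_serre_term_bad hx S, smul_zero]

lemma cs2_serre_good (x : CubeB n) (hx : ¬ Bad x) :
    cs2L n (serreDiagFun n x) = awFun n (csSet x) := by
  classical
  set F : Finset (Fin n) → SimpChain2 n := fun S =>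
    ((-1 : ℤ) ^ serreSign x S) • tensorF (csFun n (serreL x S)) (csFun n (serreR x S)) with hF
  have hterm : ∀ S ∈ (Mset x).powerset,
      (cs2L n) (((-1 : ℤ) ^ serreSign x S) • Finsupp.single (serreL x S, serreR x S) (1 : ℤ))
        = F S := by
    intro S _
    rw [map_smul, cs2L, liftZ_single, one_smul]
  have hsub : (csSet x).image (Sv x) ⊆ (Mset x).powerset := by
    intro S hS
    obtain ⟨v, _, rfl⟩ := Finset.mem_image.mp hS
    exact Finset.mem_powerset.mpr (Sv_subset x v)
  have hzero : ∀ S ∈ (Mset x).powerset, S ∉ (csSet x).image (Sv x) → F S = 0 := by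
    intro S hS hnot
    have hSsub : S ⊆ Mset x := Finset.mem_powerset.mp hS
    by_cases hdc : ∃ i j : Fin n, x i = CubeF.mid ∧ i ∉ S ∧ j ∈ S ∧ i < j
    · obtain ⟨i, j, him, hiS, hjS, hij⟩ := hdc
      have hbad : Bad (serreL x S) :=
        ⟨i, j, hij, serreL_eq_zero.mpr (Or.inr ⟨him, hiS⟩), (serreL_eq_mid hSsub).mpr hjS⟩
      rw [hF]
      simp only
      rw [csFun_of_bad _ hbad, tensorF_zero_left, smul_zero]
    · obtain ⟨v, hv, rfl⟩ := exists_Sv hx hSsub hdc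
      exact absurd (Finset.mem_image_of_mem _ hv) hnot
  have hterm2 : ∀ v ∈ csSet x, F (Sv x v) =
      Finsupp.single ((csSet x).filter (fun w => w ≤ v), (csSet x).filter (fun w => v ≤ w)) 1 := by
    intro v hv
    rw [hF]
    simp only
    rw [serreSign_Sv, pow_zero, one_smul,
      csFun_of_not_bad _ (not_bad_serreL_Sv hx hv),
      csFun_of_not_bad _ (not_bad_serreR hx _),
      tensorF_single_single, csSet_serreL_Sv hx hv, csSet_serreR_Sv hx hv, mul_one]
  calc cs2L n (serreDiagFun n x)
      = ∑ S ∈ (Mset x).powerset, F S := by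
        rw [serreDiagFun, map_sum]
        exact Finset.sum_congr rfl hterm
    _ = ∑ S ∈ (csSet x).image (Sv x), F S := (Finset.sum_subset hsub hzero).symm
    _ = ∑ v ∈ csSet x, F (Sv x v) :=
        Finset.sum_image (fun v hv w hw h => Sv_injOn hx v hv w hw h)
    _ = awFun n (csSet x) := by
        rw [awFun]
        exact Finset.sum_congr rfl hterm2

end CartanSerre

open CartanSerre in
/-- The Cartan–Serre map `CS : C(□^n) → C(Δ^n)` is a map of counital
coalgebras: `(CS ⊗ CS) ∘ Δ_□ = Δ_AW ∘ CS` and `ε_Δ ∘ CS = ε_□`. -/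
theorem cartanSerre_coalgebra_map (n : ℕ) :
    (cs2L n).comp (serreDiag n) = (awDiag n).comp (csL n) ∧
    (simpEps n).comp (csL n) = cubeEps n := by
  constructor
  · apply Finsupp.lhom_ext
    intro x c
    rw [LinearMap.comp_apply, LinearMap.comp_apply, serreDiag, csL, liftZ_single,
      liftZ_single, map_smul, map_smul]
    congr 1
    by_cases hx : Bad x
    · rw [csFun_of_bad _ hx, map_zero, cs2_serre_bad x hx]
    · rw [csFun_of_not_bad _ hx, cs2_serre_good x hx, awDiag, liftZ_single, one_smul]
  · apply Finsupp.lhom_ext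
    intro x c
    rw [LinearMap.comp_apply, csL, liftZ_single, map_smul, cubeEps, liftZ_single', smul_eq_mul]
    congr 1
    by_cases hx : Bad x
    · rw [csFun_of_bad _ hx, map_zero, if_neg]
      intro h0
      obtain ⟨i, j, hij, hi, hj⟩ := hx
      rw [cubeDeg, Finset.card_eq_zero] at h0
      have : j ∈ Finset.univ.filter (fun i => x i = CubeF.mid) :=
        Finset.mem_filter.mpr ⟨Finset.mem_univ j, hj⟩
      rw [h0] at this
      exact absurd this (Finset.notMem_empty j)
    · rw [csFun_of_not_bad _ hx, simpEps, liftZ_single', one_mul, card_csSet]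
      by_cases h0 : cubeDeg x = 0
      · rw [if_pos (by omega), if_pos h0]
      · rw [if_neg (by omega), if_neg h0]
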